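/- Consider the linear difference equation ∑_{m=0}^{d} p_m(n) y(n+m) = p(n) with p₀, p_d nonzero polynomials over a field K of characteristic zero. Let N = dis(p_d(n-d), p₀(n)) ≥ 0 and G(n) = gcd(∏_{j=0}^{N} p₀(n+j), ∏_{j=0}^{N} p_d(n-d-j)). If y(n) = f(n)/g(n) is a rational solution in lowest terms (gcd(f,g)=1), then g(n) divides G(n). That is, G(n) is a universal denominator. -/

import Mathlib

open Polynomial Finset

namespace AbramovAux
variable {F : Type*} [Field F]

lemma rm_comp (h : F[X]) (a c : F) :
    rootMultiplicity a (h.comp (X + C c)) = rootMultiplicity (a + c) h := by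
  rw [rootMultiplicity_eq_rootMultiplicity (p := h.comp (X + C c)) (t := a),
    comp_assoc, rootMultiplicity_eq_rootMultiplicity (p := h) (t := a + c)]
  congr 2
  simp [add_comp, C_add, add_assoc]

lemma rm_comp_sub (h : F[X]) (a c : F) :
    rootMultiplicity a (h.comp (X - C c)) = rootMultiplicity (a - c) h := by
  rw [show X - C c = X + C (-c) by rw [C_neg, ← sub_eq_add_neg], rm_comp, ← sub_eq_add_neg]

lemma comp_X_sub_C_ne_zero {h : F[X]} (hh : h ≠ 0) (c : F) : h.comp (X - C c) ≠ 0 := by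
  rw [show X - C c = X + C (-c) by rw [C_neg, ← sub_eq_add_neg]]
  exact comp_X_add_C_ne_zero_iff.2 hh

lemma rm_prod {ι : Type*} (s : Finset ι) (f : ι → F[X]) (hf : ∀ i ∈ s, f i ≠ 0) (a : F) :
    rootMultiplicity a (∏ i ∈ s, f i) = ∑ i ∈ s, rootMultiplicity a (f i) := by
  classical
  induction s using Finset.induction with
  | empty => simp [rootMultiplicity_eq_zero_iff, IsRoot]
  | @insert b s hx ih =>
    rw [Finset.prod_insert hx, Finset.sum_insert hx,
      rootMultiplicity_mul (mul_ne_zero (hf b (Finset.mem_insert_self b s))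
        (Finset.prod_ne_zero_iff.2 fun i hi => hf i (Finset.mem_insert_of_mem hi))),
      ih (fun i hi => hf i (Finset.mem_insert_of_mem hi))]

lemma dvd_of_rm_le [IsAlgClosed F] {g H : F[X]} (hg : g ≠ 0) (hH : H ≠ 0)
    (h : ∀ a : F, rootMultiplicity a g ≤ rootMultiplicity a H) : g ∣ H := by
  classical
  have hr : g.roots ≤ H.roots := Multiset.le_iff_count.2 fun a => by
    rw [count_roots, count_roots]; exact h a
  have h1 : (g.roots.map fun a => X - C a).prod ∣ H :=
    (Multiset.prod_X_sub_C_dvd_iff_le_roots hH _).2 hr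
  have h2 : g = C g.leadingCoeff * (g.roots.map fun a => X - C a).prod :=
    Splits.eq_prod_roots (IsAlgClosed.splits g)
  rw [h2]
  exact (isUnit_C.2 (leadingCoeff_ne_zero.2 hg).isUnit).mul_left_dvd.2 h1


section Main
variable [IsAlgClosed F] [CharZero F]

theorem main (d : ℕ) (p : ℕ → F[X]) (q f g : F[X])
    (hp0 : p 0 ≠ 0) (hpd : p d ≠ 0) (hg : g ≠ 0) (hf : f ≠ 0) (hfg : IsCoprime f g) (N : ℕ)
    (hcop : ∀ k : ℕ, N < k →
      IsCoprime ((p d).comp (X - C (d : F))) ((p 0).comp (X + C (k : F))))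
    (heq : ∑ m ∈ range (d + 1),
        p m * f.comp (X + C (m : F)) *
          ∏ j ∈ (range (d + 1)).erase m, g.comp (X + C (j : F))
      = q * ∏ j ∈ range (d + 1), g.comp (X + C (j : F))) :
    g ∣ (∏ j ∈ range (N + 1), (p 0).comp (X + C (j : F))) ∧
    g ∣ (∏ j ∈ range (N + 1), (p d).comp (X - C ((d : F) + (j : F)))) := by
  classical
  have hA0 : (∏ j ∈ range (N + 1), (p 0).comp (X + C (j : F))) ≠ 0 :=
    prod_ne_zero_iff.2 fun j _ => comp_X_add_C_ne_zero_iff.2 hp0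
  have hB0 : (∏ j ∈ range (N + 1), (p d).comp (X - C ((d : F) + (j : F)))) ≠ 0 :=
    prod_ne_zero_iff.2 fun j _ => comp_X_sub_C_ne_zero hpd _
  suffices key : ∀ β : F,
      rootMultiplicity β g ≤
        rootMultiplicity β (∏ j ∈ range (N + 1), (p 0).comp (X + C (j : F))) ∧
      rootMultiplicity β g ≤
        rootMultiplicity β (∏ j ∈ range (N + 1), (p d).comp (X - C ((d : F) + (j : F)))) by
    exact ⟨dvd_of_rm_le hg hA0 fun a => (key a).1, dvd_of_rm_le hg hB0 fun a => (key a).2⟩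
  intro β
  -- orbit multiplicity functions
  set v : ℤ → ℕ := fun t => rootMultiplicity (β + t) g with hv_def
  set u : ℤ → ℕ := fun t => rootMultiplicity (β + t) (p 0) with hu_def
  set w : ℤ → ℕ := fun t => rootMultiplicity (β + t - d) (p d) with hw_def
  -- multiplicity of shifted g at orbit points
  have hvc : ∀ (t : ℤ) (j : ℕ),
      rootMultiplicity (β + (t : F)) (g.comp (X + C (j : F))) = v (t + j) := by
    intro t j
    rw [rm_comp, hv_def]
    congr 1
    push_cast
    ring
  have hrmE : ∀ (t : ℤ) (s : Finset ℕ),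
      rootMultiplicity (β + (t : F)) (∏ j ∈ s, g.comp (X + C (j : F)))
        = ∑ j ∈ s, v (t + j) := by
    intro t s
    rw [rm_prod _ _ (fun j _ => comp_X_add_C_ne_zero_iff.2 hg)]
    exact Finset.sum_congr rfl fun j _ => hvc t j
  -- vanishing of f at roots of g on the orbit
  have hφ : ∀ t : ℤ, 0 < v t → rootMultiplicity (β + (t : F)) f = 0 := by
    intro t ht
    by_contra h
    have hrf : f.IsRoot (β + t) := (rootMultiplicity_pos hf).1 (Nat.pos_of_ne_zero h)
    have hrg : g.IsRoot (β + t) := (rootMultiplicity_pos hg).1 ht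
    obtain ⟨a, b, hab⟩ := hfg
    have h1 := congrArg (eval (β + (t : F))) hab
    simp only [eval_add, eval_mul, eval_one, hrf.eq_zero, hrg.eq_zero, mul_zero, add_zero] at h1
    exact zero_ne_one h1

  -- terms of the recurrence
  set T : ℕ → F[X] := fun m =>
    p m * f.comp (X + C (m : F)) * ∏ j ∈ (range (d + 1)).erase m, g.comp (X + C (j : F))
    with hT_def
  have hgprod : ∀ s : Finset ℕ, (∏ j ∈ s, g.comp (X + C (j : F))) ≠ 0 :=
    fun s => prod_ne_zero_iff.2 fun j _ => comp_X_add_C_ne_zero_iff.2 hg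
  have hfc : ∀ m : ℕ, f.comp (X + C (m : F)) ≠ 0 := fun m => comp_X_add_C_ne_zero_iff.2 hf
  have hφc : ∀ (t : ℤ) (m : ℕ), 0 < v (t + m) →
      rootMultiplicity (β + (t : F)) (f.comp (X + C (m : F))) = 0 := by
    intro t m h
    rw [rm_comp]
    have he : β + (t : F) + (m : F) = β + ((t + (m : ℤ) : ℤ) : F) := by push_cast; ring
    rw [he]
    exact hφ (t + m) h
  -- Key inequality A : isolating the m = 0 term
  have keyA : ∀ t : ℤ, 0 < v t →
      v t ≤ u t + ((range (d + 1)).erase 0).sup fun m => v (t + (m : ℤ)) := by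
    intro t hvt
    set Mx := ((range (d + 1)).erase 0).sup (fun m => v (t + (m : ℤ))) with hMx_def
    have hMS : Mx ≤ ∑ j ∈ (range (d + 1)).erase 0, v (t + (j : ℤ)) :=
      Finset.sup_le fun m hm => Finset.single_le_sum (f := fun j : ℕ => v (t + (j : ℤ)))
        (fun i _ => Nat.zero_le _) hm
    set S := ∑ j ∈ (range (d + 1)).erase 0, v (t + (j : ℤ)) with hS_def
    set k := v t + S - Mx with hk_def
    have h0mem : (0 : ℕ) ∈ range (d + 1) := mem_range.2 (Nat.succ_pos d)
    have htot : S + v t = ∑ j ∈ range (d + 1), v (t + (j : ℤ)) := by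
      have h := Finset.sum_erase_add (range (d + 1)) (fun j : ℕ => v (t + (j : ℤ))) h0mem
      simpa using h
    have hdvdP : (X - C (β + (t : F))) ^ k ∣
        q * ∏ j ∈ range (d + 1), g.comp (X + C (j : F)) := by
      refine Dvd.dvd.mul_left ?_ q
      rw [← le_rootMultiplicity_iff (hgprod _), hrmE]
      omega
    have hdvdT : ∀ m ∈ (range (d + 1)).erase 0, (X - C (β + (t : F))) ^ k ∣ T m := by
      intro m hm
      refine Dvd.dvd.mul_left ?_ _
      rw [← le_rootMultiplicity_iff (hgprod _), hrmE]
      have h1 : (∑ j ∈ (range (d + 1)).erase m, v (t + (j : ℤ))) + v (t + (m : ℤ))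
          = ∑ j ∈ range (d + 1), v (t + (j : ℤ)) :=
        Finset.sum_erase_add _ _ (Finset.mem_of_mem_erase hm)
      have h2 : v (t + (m : ℤ)) ≤ Mx :=
        Finset.le_sup (f := fun m : ℕ => v (t + (m : ℤ))) hm
      omega
    have hT0eq : T 0 = (q * ∏ j ∈ range (d + 1), g.comp (X + C (j : F)))
        - ∑ m ∈ (range (d + 1)).erase 0, T m := by
      rw [← heq, ← Finset.add_sum_erase _ T h0mem]
      ring
    have hdvd0 : (X - C (β + (t : F))) ^ k ∣ T 0 := by
      rw [hT0eq]
      exact hdvdP.sub (Finset.dvd_sum hdvdT)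
    have hT0ne : T 0 ≠ 0 := mul_ne_zero (mul_ne_zero hp0 (hfc 0)) (hgprod _)
    have hkle : k ≤ rootMultiplicity (β + (t : F)) (T 0) :=
      (le_rootMultiplicity_iff hT0ne).2 hdvd0
    have hrmT0 : rootMultiplicity (β + (t : F)) (T 0)
        = u t + rootMultiplicity (β + (t : F)) (f.comp (X + C ((0 : ℕ) : F))) + S := by
      simp only [hT_def]
      rw [rootMultiplicity_mul (mul_ne_zero (mul_ne_zero hp0 (hfc 0)) (hgprod _)),
        rootMultiplicity_mul (mul_ne_zero hp0 (hfc 0)), hrmE]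
    have hφ0 : rootMultiplicity (β + (t : F)) (f.comp (X + C ((0 : ℕ) : F))) = 0 :=
      hφc t 0 (by simpa using hvt)
    rw [hrmT0, hφ0] at hkle
    omega
  -- Key inequality B : isolating the m = d term
  have keyB : ∀ t : ℤ, 0 < v t →
      v t ≤ w t + ((range (d + 1)).erase d).sup fun m => v (t - d + (m : ℤ)) := by
    intro t hvt
    set Mx := ((range (d + 1)).erase d).sup (fun m => v (t - d + (m : ℤ))) with hMx_def
    have hMS : Mx ≤ ∑ j ∈ (range (d + 1)).erase d, v (t - d + (j : ℤ)) :=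
      Finset.sup_le fun m hm => Finset.single_le_sum (f := fun j : ℕ => v (t - d + (j : ℤ)))
        (fun i _ => Nat.zero_le _) hm
    set S := ∑ j ∈ (range (d + 1)).erase d, v (t - d + (j : ℤ)) with hS_def
    set k := v t + S - Mx with hk_def
    have hdmem : d ∈ range (d + 1) := mem_range.2 (Nat.lt_succ_self d)
    have htd : t - (d : ℤ) + ((d : ℕ) : ℤ) = t := by push_cast; ring
    have htot : S + v t = ∑ j ∈ range (d + 1), v (t - d + (j : ℤ)) := by
      have h := Finset.sum_erase_add (range (d + 1)) (fun j : ℕ => v (t - d + (j : ℤ))) hdmem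
      simp only [htd] at h
      simpa using h
    have hdvdP : (X - C (β + ((t - d : ℤ) : F))) ^ k ∣
        q * ∏ j ∈ range (d + 1), g.comp (X + C (j : F)) := by
      refine Dvd.dvd.mul_left ?_ q
      rw [← le_rootMultiplicity_iff (hgprod _), hrmE]
      omega
    have hdvdT : ∀ m ∈ (range (d + 1)).erase d, (X - C (β + ((t - d : ℤ) : F))) ^ k ∣ T m := by
      intro m hm
      refine Dvd.dvd.mul_left ?_ _
      rw [← le_rootMultiplicity_iff (hgprod _), hrmE]
      have h1 : (∑ j ∈ (range (d + 1)).erase m, v (t - d + (j : ℤ))) + v (t - d + (m : ℤ))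
          = ∑ j ∈ range (d + 1), v (t - d + (j : ℤ)) :=
        Finset.sum_erase_add _ _ (Finset.mem_of_mem_erase hm)
      have h2 : v (t - d + (m : ℤ)) ≤ Mx :=
        Finset.le_sup (f := fun m : ℕ => v (t - d + (m : ℤ))) hm
      omega
    have hTdeq : T d = (q * ∏ j ∈ range (d + 1), g.comp (X + C (j : F)))
        - ∑ m ∈ (range (d + 1)).erase d, T m := by
      rw [← heq, ← Finset.add_sum_erase _ T hdmem]
      ring
    have hdvdd : (X - C (β + ((t - d : ℤ) : F))) ^ k ∣ T d := by
      rw [hTdeq]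
      exact hdvdP.sub (Finset.dvd_sum hdvdT)
    have hTdne : T d ≠ 0 := mul_ne_zero (mul_ne_zero hpd (hfc d)) (hgprod _)
    have hkle : k ≤ rootMultiplicity (β + ((t - d : ℤ) : F)) (T d) :=
      (le_rootMultiplicity_iff hTdne).2 hdvdd
    have hrmTd : rootMultiplicity (β + ((t - d : ℤ) : F)) (T d)
        = rootMultiplicity (β + ((t - d : ℤ) : F)) (p d)
          + rootMultiplicity (β + ((t - d : ℤ) : F)) (f.comp (X + C ((d : ℕ) : F))) + S := by
      simp only [hT_def]
      rw [rootMultiplicity_mul (mul_ne_zero (mul_ne_zero hpd (hfc d)) (hgprod _)),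
        rootMultiplicity_mul (mul_ne_zero hpd (hfc d)), hrmE]
    have hφd : rootMultiplicity (β + ((t - d : ℤ) : F)) (f.comp (X + C ((d : ℕ) : F))) = 0 :=
      hφc (t - d) d (by rw [htd]; exact hvt)
    have hwt : rootMultiplicity (β + ((t - d : ℤ) : F)) (p d) = w t := by
      rw [hw_def]
      congr 1
      push_cast
      ring
    rw [hrmTd, hφd, hwt] at hkle
    omega

  -- support of the orbit
  have hinj : Set.InjOn (fun t : ℤ => β + (t : F)) ↑(g.roots.toFinset.preimage
      (fun t : ℤ => β + (t : F)) (fun a _ b _ h => by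
        have h2 : ((a : ℤ) : F) = ((b : ℤ) : F) := by exact add_left_cancel h
        exact_mod_cast h2)) := fun a _ b _ h => by
    have h2 : ((a : ℤ) : F) = ((b : ℤ) : F) := by exact add_left_cancel h
    exact_mod_cast h2
  set Sfin : Finset ℤ := g.roots.toFinset.preimage (fun t : ℤ => β + (t : F))
      (fun a _ b _ h => by
        have h2 : ((a : ℤ) : F) = ((b : ℤ) : F) := by exact add_left_cancel h
        exact_mod_cast h2) with hSfin_def
  have hmemS : ∀ t : ℤ, t ∈ Sfin ↔ 0 < v t := by
    intro t
    refine Finset.mem_preimage.trans ?_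
    rw [Multiset.mem_toFinset, mem_roots hg, hv_def]
    exact ⟨fun h => (rootMultiplicity_pos hg).2 h, fun h => (rootMultiplicity_pos hg).1 h⟩
  have hrmg : rootMultiplicity β g = v 0 := by rw [hv_def]; norm_num
  -- case : β is not a root of g
  by_cases hv0 : v 0 = 0
  · constructor <;> · rw [hrmg, hv0]; exact Nat.zero_le _
  have hv0' : 0 < v 0 := Nat.pos_of_ne_zero hv0
  have hne : Sfin.Nonempty := ⟨0, (hmemS 0).2 hv0'⟩
  set Tm := Sfin.max' hne with hTm_def
  set Bm := Sfin.min' hne with hBm_def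
  have HT : ∀ s : ℤ, Tm < s → v s = 0 := by
    intro s hs
    by_contra h
    exact absurd (Sfin.le_max' s ((hmemS s).2 (Nat.pos_of_ne_zero h))) (by omega)
  have HB : ∀ s : ℤ, s < Bm → v s = 0 := by
    intro s hs
    by_contra h
    exact absurd (Sfin.min'_le s ((hmemS s).2 (Nat.pos_of_ne_zero h))) (by omega)
  have hB0 : Bm ≤ 0 := Sfin.min'_le 0 ((hmemS 0).2 hv0')
  have hT0 : 0 ≤ Tm := Sfin.le_max' 0 ((hmemS 0).2 hv0')
  have hvT : 0 < v Tm := (hmemS Tm).1 (Sfin.max'_mem hne)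
  have hvB : 0 < v Bm := (hmemS Bm).1 (Sfin.min'_mem hne)
  -- the supremum in keyA vanishes at the top of the support
  have hsupT : (((range (d + 1)).erase 0).sup fun m => v (Tm + (m : ℤ))) = 0 := by
    refine Nat.le_zero.1 (Finset.sup_le fun m hm => ?_)
    have hm1 : m ≠ 0 := (Finset.mem_erase.1 hm).1
    have : (1 : ℤ) ≤ (m : ℤ) := by exact_mod_cast Nat.one_le_iff_ne_zero.2 hm1
    rw [HT (Tm + m) (by omega)]
  have huT : 0 < u Tm := by
    have h := keyA Tm hvT
    rw [hsupT] at h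
    omega
  -- the supremum in keyB vanishes at the bottom of the support
  have hsupB : (((range (d + 1)).erase d).sup fun m => v (Bm - d + (m : ℤ))) = 0 := by
    refine Nat.le_zero.1 (Finset.sup_le fun m hm => ?_)
    have hm1 : m ≠ d := (Finset.mem_erase.1 hm).1
    have hm2 : m < d + 1 := mem_range.1 (Finset.mem_of_mem_erase hm)
    have : (m : ℤ) < (d : ℤ) := by exact_mod_cast by omega
    rw [HB (Bm - d + m) (by omega)]
  have hwB : 0 < w Bm := by
    have h := keyB Bm hvB
    rw [hsupB] at h
    omega
  -- dispersion bound : the support has width at most N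
  have hdisp : Tm - Bm ≤ (N : ℤ) := by
    by_contra hcon
    push_neg at hcon
    obtain ⟨a, b, hab⟩ := hcop (Tm - Bm).toNat (by omega)
    have e1 : (p d).IsRoot (β + Bm - d) := (rootMultiplicity_pos hpd).1 hwB
    have e2 : (p 0).IsRoot (β + Tm) := (rootMultiplicity_pos hp0).1 huT
    have hpt : β + (Bm : F) + (((Tm - Bm).toNat : ℕ) : F) = β + (Tm : F) := by
      have hzk : (((Tm - Bm).toNat : ℕ) : ℤ) = Tm - Bm := by omega
      have : (((Tm - Bm).toNat : ℕ) : F) = ((Tm : ℤ) : F) - ((Bm : ℤ) : F) := by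
        exact_mod_cast congrArg (Int.cast : ℤ → F) hzk
      rw [this]
      ring
    have h1 := congrArg (eval (β + (Bm : F))) hab
    simp only [eval_add, eval_mul, eval_one, eval_comp, eval_sub, eval_X, eval_C] at h1
    rw [hpt] at h1
    rw [show (p d).eval (β + (Bm : F) - (d : F)) = 0 from e1.eq_zero,
      show (p 0).eval (β + (Tm : F)) = 0 from e2.eq_zero] at h1
    simp at h1
  -- first induction : downward from the top of the support
  have claim1 : ∀ n : ℕ, ∀ t : ℤ, Tm ≤ t + n → v t ≤ ∑ s ∈ Finset.Icc t Tm, u s := by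
    intro n
    induction n with
    | zero =>
      intro t ht
      simp only [Nat.cast_zero, add_zero] at ht
      by_cases hz : v t = 0
      · rw [hz]; exact Nat.zero_le _
      have hteq : t = Tm := by
        rcases lt_or_eq_of_le ht with h | h
        · exact absurd (HT t h) hz
        · omega
      subst hteq
      have h := keyA Tm hvT
      rw [hsupT] at h
      rw [Finset.Icc_self, Finset.sum_singleton]
      omega
    | succ n ih =>
      intro t ht
      by_cases hcovered : Tm ≤ t + n
      · exact ih t hcovered
      by_cases hz : v t = 0
      · rw [hz]; exact Nat.zero_le _
      have htT : t < Tm := by push_cast at ht hcovered ⊢; omega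
      have h := keyA t (Nat.pos_of_ne_zero hz)
      have hsup : (((range (d + 1)).erase 0).sup fun m => v (t + (m : ℤ)))
          ≤ ∑ s ∈ Finset.Ioc t Tm, u s := by
        refine Finset.sup_le fun m hm => ?_
        have hm1 : m ≠ 0 := (Finset.mem_erase.1 hm).1
        have hm2 : (1 : ℤ) ≤ (m : ℤ) := by exact_mod_cast Nat.one_le_iff_ne_zero.2 hm1
        have hih := ih (t + m) (by push_cast at ht hcovered ⊢; omega)
        refine le_trans hih (Finset.sum_le_sum_of_subset fun s hs => ?_)
        simp only [Finset.mem_Icc, Finset.mem_Ioc] at hs ⊢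
        omega
      have hsplit : u t + ∑ s ∈ Finset.Ioc t Tm, u s = ∑ s ∈ Finset.Icc t Tm, u s := by
        rw [← Finset.Icc_erase_left]
        exact Finset.add_sum_erase _ u (Finset.mem_Icc.2 ⟨le_refl t, le_of_lt htT⟩)
      omega
  -- second induction : upward from the bottom of the support
  have claim2 : ∀ n : ℕ, ∀ t : ℤ, t - n ≤ Bm → v t ≤ ∑ s ∈ Finset.Icc Bm t, w s := by
    intro n
    induction n with
    | zero =>
      intro t ht
      simp only [Nat.cast_zero, sub_zero] at ht
      by_cases hz : v t = 0
      · rw [hz]; exact Nat.zero_le _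
      have hteq : t = Bm := by
        rcases lt_or_eq_of_le ht with h | h
        · exact absurd (HB t h) hz
        · omega
      subst hteq
      have h := keyB Bm hvB
      rw [hsupB] at h
      rw [Finset.Icc_self, Finset.sum_singleton]
      omega
    | succ n ih =>
      intro t ht
      by_cases hcovered : t - n ≤ Bm
      · exact ih t hcovered
      by_cases hz : v t = 0
      · rw [hz]; exact Nat.zero_le _
      have htB : Bm < t := by push_cast at ht hcovered ⊢; omega
      have h := keyB t (Nat.pos_of_ne_zero hz)
      have hsup : (((range (d + 1)).erase d).sup fun m => v (t - d + (m : ℤ)))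
          ≤ ∑ s ∈ Finset.Ico Bm t, w s := by
        refine Finset.sup_le fun m hm => ?_
        have hm1 : m ≠ d := (Finset.mem_erase.1 hm).1
        have hm2 : m < d + 1 := mem_range.1 (Finset.mem_of_mem_erase hm)
        have hm3 : (m : ℤ) < (d : ℤ) := by exact_mod_cast (show m < d by omega)
        have hih := ih (t - d + m) (by push_cast at ht hcovered ⊢; omega)
        refine le_trans hih (Finset.sum_le_sum_of_subset fun s hs => ?_)
        simp only [Finset.mem_Icc, Finset.mem_Ico] at hs ⊢
        omega
      have hsplit : w t + ∑ s ∈ Finset.Ico Bm t, w s = ∑ s ∈ Finset.Icc Bm t, w s := by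
        rw [← Finset.Icc_erase_right]
        exact Finset.add_sum_erase _ w (Finset.mem_Icc.2 ⟨le_of_lt htB, le_refl t⟩)
      omega

  constructor
  · have hrmA : rootMultiplicity β (∏ j ∈ range (N + 1), (p 0).comp (X + C (j : F)))
        = ∑ j ∈ range (N + 1), u (j : ℤ) := by
      rw [rm_prod _ _ (fun j _ => comp_X_add_C_ne_zero_iff.2 hp0)]
      refine Finset.sum_congr rfl fun j _ => ?_
      rw [rm_comp, hu_def]
      show _ = rootMultiplicity (β + ((j : ℤ) : F)) (p 0)
      norm_cast
    have c1 : v 0 ≤ ∑ s ∈ Finset.Icc (0 : ℤ) Tm, u s := claim1 Tm.toNat 0 (by omega)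
    have c2 : ∑ s ∈ Finset.Icc (0 : ℤ) Tm, u s ≤ ∑ s ∈ Finset.Icc (0 : ℤ) (N : ℤ), u s :=
      Finset.sum_le_sum_of_subset (Finset.Icc_subset_Icc_right (by omega))
    have c3 : ∑ s ∈ Finset.Icc (0 : ℤ) (N : ℤ), u s = ∑ j ∈ range (N + 1), u (j : ℤ) := by
      rw [show Finset.Icc (0 : ℤ) (N : ℤ) = (range (N + 1)).image (fun j : ℕ => (j : ℤ)) by
        ext s
        simp only [Finset.mem_Icc, Finset.mem_image, Finset.mem_range]
        constructor
        · intro hs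
          exact ⟨s.toNat, by omega, by omega⟩
        · rintro ⟨j, hj, rfl⟩
          omega]
      rw [Finset.sum_image (fun a _ b _ h => by exact_mod_cast h)]
    rw [hrmg, hrmA]
    omega
  · have hrmB : rootMultiplicity β
        (∏ j ∈ range (N + 1), (p d).comp (X - C ((d : F) + (j : F))))
        = ∑ j ∈ range (N + 1), w (-(j : ℤ)) := by
      rw [rm_prod _ _ (fun j _ => comp_X_sub_C_ne_zero hpd _)]
      refine Finset.sum_congr rfl fun j _ => ?_
      rw [rm_comp_sub, hw_def]
      congr 1
      push_cast
      ring
    have c1 : v 0 ≤ ∑ s ∈ Finset.Icc Bm (0 : ℤ), w s := claim2 (-Bm).toNat 0 (by omega)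
    have c2 : ∑ s ∈ Finset.Icc Bm (0 : ℤ), w s ≤ ∑ s ∈ Finset.Icc (-(N : ℤ)) (0 : ℤ), w s :=
      Finset.sum_le_sum_of_subset (Finset.Icc_subset_Icc_left (by omega))
    have c3 : ∑ s ∈ Finset.Icc (-(N : ℤ)) (0 : ℤ), w s = ∑ j ∈ range (N + 1), w (-(j : ℤ)) := by
      rw [show Finset.Icc (-(N : ℤ)) (0 : ℤ) = (range (N + 1)).image (fun j : ℕ => -(j : ℤ)) by
        ext s
        simp only [Finset.mem_Icc, Finset.mem_image, Finset.mem_range]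
        constructor
        · intro hs
          exact ⟨(-s).toNat, by omega, by omega⟩
        · rintro ⟨j, hj, rfl⟩
          omega]
      rw [Finset.sum_image (fun a _ b _ h => by omega)]
    rw [hrmg, hrmB]
    omega




end Main
end AbramovAux

/-- Theorem 4.2 (Abramov's universal denominator): if `y = f/g` in lowest terms
solves `∑ₘ pₘ(n) y(n+m) = q(n)`, then `g` divides
`G(n) = gcd(∏_{j=0}^{N} p₀(n+j), ∏_{j=0}^{N} p_d(n-d-j))`, with `N` the
dispersion of `p_d(n-d)` and `p₀(n)`. -/
theorem universal_denominator {K : Type*} [Field K] [CharZero K] [DecidableEq K]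
    (d : ℕ) (p : ℕ → K[X]) (q f g : K[X])
    (hp0 : p 0 ≠ 0) (hpd : p d ≠ 0) (hg : g ≠ 0) (hfg : IsCoprime f g)
    (N : ℕ)
    (hmax : 0 < (gcd ((p d).comp (X - C (d : K))) ((p 0).comp (X + C (N : K)))).degree)
    (hcop : ∀ k : ℕ, N < k →
      IsCoprime ((p d).comp (X - C (d : K))) ((p 0).comp (X + C (k : K))))
    (heq : ∑ m ∈ range (d + 1),
        p m * f.comp (X + C (m : K)) *
          ∏ j ∈ (range (d + 1)).erase m, g.comp (X + C (j : K))
      = q * ∏ j ∈ range (d + 1), g.comp (X + C (j : K))) :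
    g ∣ gcd (∏ j ∈ range (N + 1), (p 0).comp (X + C (j : K)))
            (∏ j ∈ range (N + 1), (p d).comp (X - C ((d : K) + (j : K)))) := by
  classical
  rcases eq_or_ne f 0 with rfl | hf
  · exact (isCoprime_zero_left.1 hfg).dvd
  set F := AlgebraicClosure K with hF
  haveI : CharZero F := charZero_of_injective_algebraMap (algebraMap K F).injective
  set φ : K →+* F := algebraMap K F with hφdef
  have hinj : Function.Injective φ := φ.injective
  have hmapne : ∀ h : K[X], h ≠ 0 → h.map φ ≠ 0 := fun h hh => by
    rwa [Ne, Polynomial.map_eq_zero_iff hinj]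
  have hcop' : ∀ k : ℕ, N < k →
      IsCoprime (((p d).map φ).comp (X - C (d : F))) (((p 0).map φ).comp (X + C (k : F))) := by
    intro k hk
    have h := (hcop k hk).map (mapRingHom φ)
    simpa only [coe_mapRingHom, Polynomial.map_comp, Polynomial.map_sub, Polynomial.map_add,
      Polynomial.map_X, Polynomial.map_C, map_natCast φ, Polynomial.map_natCast] using h
  have heq' : ∑ m ∈ range (d + 1),
        (p m).map φ * (f.map φ).comp (X + C (m : F)) *
          ∏ j ∈ (range (d + 1)).erase m, (g.map φ).comp (X + C (j : F))
      = q.map φ * ∏ j ∈ range (d + 1), (g.map φ).comp (X + C (j : F)) := by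
    have h := congrArg (Polynomial.map φ) heq
    simpa only [Polynomial.map_sum, Polynomial.map_mul, Polynomial.map_prod,
      Polynomial.map_comp, Polynomial.map_add, Polynomial.map_X, Polynomial.map_C,
      map_natCast φ, Polynomial.map_natCast] using h
  have hfg' : IsCoprime (f.map φ) (g.map φ) := by
    have h := hfg.map (mapRingHom φ)
    simpa only [coe_mapRingHom] using h
  have hmain := AbramovAux.main d (fun m => (p m).map φ) (q.map φ) (f.map φ) (g.map φ)
    (hmapne _ hp0) (hmapne _ hpd) (hmapne _ hg) (hmapne _ hf) hfg' N hcop' heq'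
  have hdvd1 : g ∣ ∏ j ∈ range (N + 1), (p 0).comp (X + C (j : K)) := by
    rw [← map_dvd_map' φ]
    have h1 : (∏ j ∈ range (N + 1), (p 0).comp (X + C (j : K))).map φ
        = ∏ j ∈ range (N + 1), ((p 0).map φ).comp (X + C (j : F)) := by
      simp only [Polynomial.map_prod, Polynomial.map_comp, Polynomial.map_add,
        Polynomial.map_X, Polynomial.map_C, map_natCast φ, Polynomial.map_natCast]
    rw [h1]
    exact hmain.1
  have hdvd2 : g ∣ ∏ j ∈ range (N + 1), (p d).comp (X - C ((d : K) + (j : K))) := by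
    rw [← map_dvd_map' φ]
    have h1 : (∏ j ∈ range (N + 1), (p d).comp (X - C ((d : K) + (j : K)))).map φ
        = ∏ j ∈ range (N + 1), ((p d).map φ).comp (X - C ((d : F) + (j : F))) := by
      simp only [Polynomial.map_prod, Polynomial.map_comp, Polynomial.map_sub,
        Polynomial.map_add, Polynomial.map_X, Polynomial.map_C, map_natCast φ,
        Polynomial.map_natCast, _root_.map_add φ]
    rw [h1]
    exact hmain.2
  exact dvd_gcd hdvd1 hdvd2
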